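/- Let N = ℤ × aℤ for a positive integer a, let ρ be the Schrödinger representation, τ Linnell's trace on the N-periodic von Neumann algebra A_N given by τ(T) = Σ_{h=0}^{a-1} ⟨T χ_h, χ_h⟩, and for g ∈ L¹([0,1)²) let M_g = Z^{-1}(g·Z·). Then for k,l ∈ ℤ, the Fourier–Wigner coefficient τ(M_g ρ(-k/a, -l, 1)) equals e^{πilk/a}·∫_{[0,1)²} g(θ,σ) e^{-2πi(lσ + kθ/a)} dθ dσ if a divides k, and equals 0 otherwise. -/

import Mathlib

open Complex MeasureTheory

/-- The Schrödinger representation acting pointwise: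
`(ρ(x,y,z)φ)(t) = z e^{πi(xy+2yt)} φ(t+x)`. -/
noncomputable def rho (x y : ℝ) (z : ℂ) (φ : ℝ → ℂ) : ℝ → ℂ := fun t =>
  z * Complex.exp (Real.pi * Complex.I * (x * y + 2 * y * t)) * φ (t + x)

/-- The Zak transform `(Zφ)(θ,σ) = Σ_{l∈ℤ} φ(σ-l) e^{2πilθ}`. -/
noncomputable def zak (φ : ℝ → ℂ) (θ σ : ℝ) : ℂ :=
  ∑' l : ℤ, φ (σ - l) * Complex.exp (2 * Real.pi * Complex.I * l * θ)

/-- Lebesgue measure on the fundamental square `Ω = [0,1) × [0,1)`. -/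
noncomputable def muOmega : Measure (ℝ × ℝ) :=
  (volume : Measure (ℝ × ℝ)).restrict (Set.Ico (0 : ℝ) 1 ×ˢ Set.Ico (0 : ℝ) 1)

/-- The indicator function `χ_h` of `[h/a, (h+1)/a)`. -/
noncomputable def chi (a h : ℕ) : ℝ → ℂ :=
  (Set.Ico ((h : ℝ) / a) (((h : ℝ) + 1) / a)).indicator fun _ => (1 : ℂ)

/- Auxiliary lemmas -/

lemma chi_subset (a h : ℕ) (ha : h < a) :
    Set.Ico ((h : ℝ) / a) (((h : ℝ) + 1) / a) ⊆ Set.Ico (0 : ℝ) 1 := by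
  have ha0 : (0:ℝ) < a := by exact_mod_cast Nat.pos_of_ne_zero (by omega)
  intro x hx
  constructor
  · exact le_trans (div_nonneg (by positivity) ha0.le) hx.1
  · refine lt_of_lt_of_le hx.2 ((div_le_one ha0).mpr ?_)
    have : (h:ℝ) + 1 ≤ a := by exact_mod_cast ha
    linarith

lemma chi_zero_of_ne (a h : ℕ) (ha : h < a) {σ : ℝ} (hσ : σ ∈ Set.Ico (0:ℝ) 1)
    {x : ℝ} (j : ℤ) (hj : j ≠ 0) (hx : x = σ - j) : chi a h x = 0 := by
  unfold chi
  apply Set.indicator_of_notMem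
  intro hmem
  have h2 := chi_subset a h ha hmem
  rw [hx] at h2
  have hj1 : -1 < (j:ℝ) := by linarith [h2.2, hσ.1]
  have hj2 : (j:ℝ) < 1 := by linarith [h2.1, hσ.2]
  have e1 : (-1:ℤ) < j := by exact_mod_cast hj1
  have e2 : j < 1 := by exact_mod_cast hj2
  exact hj (by omega)

lemma zak_chi (a h : ℕ) (ha : h < a) (θ : ℝ) {σ : ℝ} (hσ : σ ∈ Set.Ico (0:ℝ) 1) :
    zak (chi a h) θ σ = chi a h σ := by
  unfold zak
  rw [tsum_eq_single 0]
  · simp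
  · intro b hb
    rw [chi_zero_of_ne a h ha hσ b hb rfl, zero_mul]

lemma chi_mul_conj (a h : ℕ) (σ : ℝ) :
    chi a h σ * (starRingEnd ℂ) (chi a h σ) = chi a h σ := by
  unfold chi
  by_cases hσ : σ ∈ Set.Ico ((h : ℝ) / a) (((h : ℝ) + 1) / a)
  · simp [Set.indicator_of_mem hσ]
  · simp [Set.indicator_of_notMem hσ]

lemma sum_chi (a : ℕ) (ha : 0 < a) {σ : ℝ} (hσ : σ ∈ Set.Ico (0:ℝ) 1) :
    ∑ h ∈ Finset.range a, chi a h σ = 1 := by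
  have ha0 : (0:ℝ) < a := by exact_mod_cast ha
  set h0 : ℕ := ⌊σ * a⌋₊ with hh0def
  have hσa0 : 0 ≤ σ * a := mul_nonneg hσ.1 ha0.le
  have hh0 : h0 < a := Nat.floor_lt hσa0 |>.mpr (by nlinarith [hσ.2])
  have hfl : (h0 : ℝ) ≤ σ * a := Nat.floor_le hσa0
  have hfu : σ * a < (h0 : ℝ) + 1 := Nat.lt_floor_add_one _
  rw [Finset.sum_eq_single h0]
  · unfold chi
    apply Set.indicator_of_mem
    constructor
    · rw [div_le_iff₀ ha0]; linarith
    · rw [lt_div_iff₀ ha0]; linarith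
  · intro h _ hne
    unfold chi
    apply Set.indicator_of_notMem
    intro hmem
    apply hne
    have h1 : (h:ℝ) ≤ σ * a := by
      have := hmem.1; rw [div_le_iff₀ ha0] at this; linarith
    have h2 : σ * a < (h:ℝ) + 1 := by
      have := hmem.2; rw [lt_div_iff₀ ha0] at this; linarith
    have : h = ⌊σ * a⌋₊ := by
      symm; rw [Nat.floor_eq_iff hσa0]
      exact ⟨by exact_mod_cast h1, by exact_mod_cast h2⟩
    omega
  · intro habs
    exact absurd (Finset.mem_range.mpr hh0) habs

lemma zak_rho_dvd (a h : ℕ) (ha : h < a) (k l q : ℤ) (hk : k = a * q)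
    (θ : ℝ) {σ : ℝ} (hσ : σ ∈ Set.Ico (0:ℝ) 1) :
    zak (rho (-(k : ℝ) / a) (-(l : ℝ)) 1 (chi a h)) θ σ =
      Complex.exp (Real.pi * Complex.I * l * k / a) *
        Complex.exp (-(2 * Real.pi * Complex.I * (l * σ + k * θ / a))) * chi a h σ := by
  have ha0 : (0:ℝ) < a := by exact_mod_cast Nat.pos_of_ne_zero (by omega)
  have haR : (a:ℝ) ≠ 0 := ha0.ne'
  have haC : (a:ℂ) ≠ 0 := by exact_mod_cast haR
  have hkR : (k:ℝ) = (a:ℝ) * (q:ℝ) := by exact_mod_cast hk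
  have hkC : (k:ℂ) = (a:ℂ) * (q:ℂ) := by exact_mod_cast hk
  unfold zak rho
  rw [tsum_eq_single (-q)]
  · have harg : σ - ((-q : ℤ):ℝ) + -(k:ℝ)/(a:ℝ) = σ := by
      rw [hkR]; push_cast; field_simp; ring
    rw [harg, one_mul]
    conv_lhs => rw [mul_right_comm]
    congr 1
    rw [← Complex.exp_add, ← Complex.exp_add, Complex.exp_eq_exp_iff_exists_int]
    refine ⟨-(l*q), ?_⟩
    push_cast [hkC]
    field_simp
    ring
  · intro m hm
    have hx : σ - (m:ℝ) + -(k:ℝ)/(a:ℝ) = σ - ((m + q : ℤ):ℝ) := by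
      rw [hkR]; push_cast; field_simp; ring
    rw [chi_zero_of_ne a h ha hσ (m+q) (by omega) hx, mul_zero, zero_mul]

lemma zak_rho_not_dvd (a h : ℕ) (ha : h < a) (k l : ℤ) (hk : ¬ (a:ℤ) ∣ k)
    (θ : ℝ) {σ : ℝ} (hσ : σ ∈ Set.Ico ((h:ℝ)/a) (((h:ℝ)+1)/a)) :
    zak (rho (-(k : ℝ) / a) (-(l : ℝ)) 1 (chi a h)) θ σ = 0 := by
  have ha0 : (0:ℝ) < a := by exact_mod_cast Nat.pos_of_ne_zero (by omega)
  have key : ∀ m : ℤ, chi a h (σ - (m:ℝ) + -(k:ℝ)/(a:ℝ)) = 0 := by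
    intro m
    unfold chi
    apply Set.indicator_of_notMem
    intro hmem
    have d1 : (m:ℝ) + (k:ℝ)/(a:ℝ) < 1/(a:ℝ) := by
      have h1 := hmem.1
      have h2 := hσ.2
      have e : ((h:ℝ)+1)/(a:ℝ) = (h:ℝ)/(a:ℝ) + 1/(a:ℝ) := add_div _ _ _
      have e2 : -(k:ℝ)/(a:ℝ) = -((k:ℝ)/(a:ℝ)) := neg_div _ _
      rw [e] at h2
      rw [e2] at h1
      linarith
    have d2 : -(1/(a:ℝ)) < (m:ℝ) + (k:ℝ)/(a:ℝ) := by
      have h1 := hmem.2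
      have h2 := hσ.1
      have e : ((h:ℝ)+1)/(a:ℝ) = (h:ℝ)/(a:ℝ) + 1/(a:ℝ) := add_div _ _ _
      have e2 : -(k:ℝ)/(a:ℝ) = -((k:ℝ)/(a:ℝ)) := neg_div _ _
      rw [e] at h1
      rw [e2] at h1
      linarith
    have e3 : ((m*a + k : ℤ):ℝ) = ((m:ℝ) + (k:ℝ)/(a:ℝ)) * a := by
      push_cast; field_simp
    have b1 : ((m*a + k : ℤ):ℝ) < 1 := by
      rw [e3]
      have := mul_lt_mul_of_pos_right d1 ha0
      rwa [one_div, inv_mul_cancel₀ ha0.ne'] at this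
    have b2 : (-1:ℝ) < ((m*a + k : ℤ):ℝ) := by
      rw [e3]
      have := mul_lt_mul_of_pos_right d2 ha0
      rwa [neg_mul, one_div, inv_mul_cancel₀ ha0.ne'] at this
    have b1' : (m*a + k : ℤ) < 1 := by exact_mod_cast b1
    have b2' : (-1:ℤ) < (m*a + k : ℤ) := by exact_mod_cast b2
    have hz : (m*a + k : ℤ) = 0 := Int.abs_lt_one_iff.mp (abs_lt.mpr ⟨b2', b1'⟩)
    exact hk ⟨-m, by linear_combination hz⟩
  unfold zak rho
  simp only [key, mul_zero, zero_mul]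
  exact tsum_zero

/-- The Fourier–Wigner coefficient `τ(M_g ρ(-k/a, -l, 1))`, with Linnell's trace
`τ(T) = Σ_{h=0}^{a-1} ⟨Tχ_h, χ_h⟩`, equals
`e^{πilk/a} ∫_Ω g(θ,σ) e^{-2πi(lσ + kθ/a)} dθ dσ` if `a ∣ k`, and `0` otherwise. -/
theorem stmt_14 (a : ℕ) (ha : 0 < a) (g : ℝ × ℝ → ℂ) (hg : Integrable g muOmega)
    (k l : ℤ) :
    (∑ h ∈ Finset.range a, ∫ p : ℝ × ℝ,
        g p * zak (rho (-(k : ℝ) / a) (-(l : ℝ)) 1 (chi a h)) p.1 p.2 *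
          (starRingEnd ℂ) (zak (chi a h) p.1 p.2) ∂muOmega) =
      if (a : ℤ) ∣ k then
        Complex.exp (Real.pi * Complex.I * l * k / a) *
          ∫ p : ℝ × ℝ,
            g p * Complex.exp (-(2 * Real.pi * Complex.I * (l * p.2 + k * p.1 / a))) ∂muOmega
      else 0 := by
  have ha0 : (0:ℝ) < a := by exact_mod_cast ha
  have haC : (a:ℂ) ≠ 0 := by exact_mod_cast ha0.ne'
  have hΩ : MeasurableSet (Set.Ico (0:ℝ) 1 ×ˢ Set.Ico (0:ℝ) 1) :=
    measurableSet_Ico.prod measurableSet_Ico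
  by_cases hdvd : (a:ℤ) ∣ k
  · obtain ⟨q, hq⟩ := hdvd
    rw [if_pos ⟨q, hq⟩]
    have step1 : ∀ h ∈ Finset.range a,
        (∫ p : ℝ × ℝ, g p * zak (rho (-(k : ℝ) / a) (-(l : ℝ)) 1 (chi a h)) p.1 p.2 *
          (starRingEnd ℂ) (zak (chi a h) p.1 p.2) ∂muOmega) =
        ∫ p : ℝ × ℝ, Complex.exp (Real.pi * Complex.I * l * k / a) *
          ((g p * Complex.exp (-(2 * Real.pi * Complex.I * (l * p.2 + k * p.1 / a)))) *
            chi a h p.2) ∂muOmega := by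
      intro h hh
      have hha : h < a := Finset.mem_range.mp hh
      unfold muOmega
      apply setIntegral_congr_fun hΩ
      intro p hp
      have hp2 : p.2 ∈ Set.Ico (0:ℝ) 1 := hp.2
      simp only
      rw [zak_chi a h hha p.1 hp2, zak_rho_dvd a h hha k l q hq p.1 hp2]
      linear_combination (g p * Complex.exp (Real.pi * Complex.I * l * k / a) *
        Complex.exp (-(2 * Real.pi * Complex.I * (l * p.2 + k * p.1 / a)))) *
        chi_mul_conj a h p.2
    rw [Finset.sum_congr rfl step1]
    have hFint : ∀ h : ℕ, Integrable (fun p : ℝ×ℝ =>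
        (g p * Complex.exp (-(2 * Real.pi * Complex.I * (l * p.2 + k * p.1 / a)))) *
          chi a h p.2) muOmega := by
      intro h
      have hmeas : AEStronglyMeasurable (fun p : ℝ×ℝ =>
          Complex.exp (-(2 * Real.pi * Complex.I * (l * p.2 + k * p.1 / a))) *
            chi a h p.2) muOmega := by
        apply Measurable.aestronglyMeasurable
        apply Measurable.mul
        · fun_prop
        · exact (Measurable.indicator measurable_const measurableSet_Ico).comp measurable_snd
      have hbdd : ∃ C, ∀ p : ℝ×ℝ,
          ‖Complex.exp (-(2 * Real.pi * Complex.I * (l * p.2 + k * p.1 / a))) *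
            chi a h p.2‖ ≤ C := by
        refine ⟨1, fun p => ?_⟩
        rw [norm_mul]
        have h1 : ‖Complex.exp (-(2 * Real.pi * Complex.I * (l * p.2 + k * p.1 / a)))‖ = 1 := by
          have e : (-(2 * (Real.pi:ℂ) * Complex.I * ((l:ℂ) * (p.2:ℂ) + (k:ℂ) * (p.1:ℂ) / (a:ℂ))))
              = ((-(2 * Real.pi * ((l:ℝ) * p.2 + (k:ℝ) * p.1 / (a:ℝ))) : ℝ) : ℂ) * Complex.I := by
            push_cast; ring
          rw [e, Complex.norm_exp_ofReal_mul_I]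
        have h2 : ‖chi a h p.2‖ ≤ 1 := by
          unfold chi
          by_cases hc : p.2 ∈ Set.Ico ((h : ℝ) / a) (((h : ℝ) + 1) / a)
          · rw [Set.indicator_of_mem hc]; simp
          · rw [Set.indicator_of_notMem hc]; simp
        rw [h1, one_mul]
        exact h2
      have := Integrable.bdd_mul hg hmeas (Filter.Eventually.of_forall hbdd.choose_spec)
      exact this.congr (Filter.Eventually.of_forall fun p => by ring)
    simp_rw [integral_const_mul]
    rw [← Finset.mul_sum]
    congr 1
    rw [← integral_finset_sum _ (fun h _ => hFint h)]
    unfold muOmega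
    apply setIntegral_congr_fun hΩ
    intro p hp
    simp only
    rw [← Finset.mul_sum, sum_chi a ha hp.2, mul_one]
  · rw [if_neg hdvd]
    apply Finset.sum_eq_zero
    intro h hh
    have hha : h < a := Finset.mem_range.mp hh
    unfold muOmega
    have hzero : Set.EqOn (fun p : ℝ×ℝ =>
        g p * zak (rho (-(k : ℝ) / a) (-(l : ℝ)) 1 (chi a h)) p.1 p.2 *
          (starRingEnd ℂ) (zak (chi a h) p.1 p.2)) 0
        (Set.Ico (0:ℝ) 1 ×ˢ Set.Ico (0:ℝ) 1) := by
      intro p hp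
      simp only [Pi.zero_apply]
      rw [zak_chi a h hha p.1 hp.2]
      by_cases hc : p.2 ∈ Set.Ico ((h:ℝ)/a) (((h:ℝ)+1)/a)
      · rw [zak_rho_not_dvd a h hha k l hdvd p.1 hc]; ring
      · unfold chi; rw [Set.indicator_of_notMem hc]; simp
    rw [setIntegral_congr_fun hΩ hzero]; simp
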